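/- For every real number b ≥ 1 there exists c ∈ (0,1) such that 0 ≤ (1−r)^b − 1 + br ≤ c·b·r for every r ∈ [0,2], where z^b denotes sgn(z)|z|^b for z ∈ ℝ. -/
import Mathlib

open Real Set

/-- Signed power `z^b := sgn(z)|z|^b`. -/
noncomputable def spow (z b : ℝ) : ℝ := Real.sign z * |z| ^ b

/-- Lemma A.3(ii): for every `b ≥ 1` there exists `c ∈ (0,1)` such that
`0 ≤ (1-r)^b - 1 + b r ≤ c b r` for every `r ∈ [0,2]`. -/
theorem exists_c_bound (b : ℝ) (hb : 1 ≤ b) :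
    ∃ c : ℝ, 0 < c ∧ c < 1 ∧ ∀ r ∈ Set.Icc (0:ℝ) 2,
      0 ≤ spow (1 - r) b - 1 + b * r ∧ spow (1 - r) b - 1 + b * r ≤ c * b * r := by
  have hd : (0:ℝ) < 2 * (b + 1) := by linarith
  refine ⟨1 - 1 / (2 * (b + 1)), ?_, ?_, ?_⟩
  · have h1 : 1 / (2 * (b + 1)) < 1 := by
      rw [div_lt_one hd]; linarith
    linarith
  · have h1 : 0 < 1 / (2 * (b + 1)) := by positivity
    linarith
  · rintro r ⟨hr0, hr2⟩
    have hinv : 1 / (2 * (b + 1)) * (2 * (b + 1)) = 1 := by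
      field_simp
    rcases lt_trichotomy r 1 with hrlt | hreq | hrgt
    · -- r < 1
      have hpos : 0 < 1 - r := by linarith
      have hspow : spow (1 - r) b = (1 - r) ^ b := by
        rw [spow, Real.sign_of_pos hpos, abs_of_pos hpos, one_mul]
      rw [hspow]
      constructor
      · have := one_add_mul_self_le_rpow_one_add (s := -r) (by linarith) hb
        have h2 : (1 + -r : ℝ) = 1 - r := by ring
        rw [h2] at this
        nlinarith
      · -- key: (1-r)^b * (1 + b*r) ≤ 1
        have hB : 1 + b * r ≤ (1 + r) ^ b :=
          one_add_mul_self_le_rpow_one_add (by linarith) hb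
        have hx : (0:ℝ) ≤ (1 - r) ^ b := Real.rpow_nonneg (by linarith) b
        have hmul : (1 - r) ^ b * (1 + r) ^ b = ((1 - r) * (1 + r)) ^ b :=
          (Real.mul_rpow (by linarith) (by linarith)).symm
        have hone : ((1 - r) * (1 + r)) ^ b ≤ 1 :=
          Real.rpow_le_one (by nlinarith) (by nlinarith) (by linarith)
        have hA : (1 - r) ^ b * (1 + b * r) ≤ 1 := by
          calc (1 - r) ^ b * (1 + b * r) ≤ (1 - r) ^ b * (1 + r) ^ b :=
                mul_le_mul_of_nonneg_left hB hx
            _ ≤ 1 := by rw [hmul]; exact hone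
        -- goal: (1-r)^b - 1 + b*r ≤ (1 - 1/(2(b+1))) * b * r
        have hbr : 0 ≤ b * r := by nlinarith
        have hbr1 : b * r ≤ b := by nlinarith
        nlinarith [mul_nonneg hbr hbr, hinv, hA,
          mul_le_mul_of_nonneg_left hbr1 (le_of_lt (by positivity : (0:ℝ) < 1 / (2 * (b + 1)))),
          mul_nonneg (mul_nonneg (le_of_lt (by positivity : (0:ℝ) < 1 / (2 * (b + 1)))) hbr) hbr]
    · -- r = 1
      subst hreq
      have : spow (1 - 1) b = 0 := by
        simp [spow]
      rw [this]
      constructor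
      · linarith
      · have h1 : 1 / (2 * (b + 1)) * b ≤ 1 := by
          rw [div_mul_eq_mul_div, div_le_one hd]; linarith
        nlinarith
    · -- r > 1
      have hneg : 1 - r < 0 := by linarith
      have hspow : spow (1 - r) b = -((r - 1) ^ b) := by
        rw [spow, Real.sign_of_neg hneg, abs_of_neg hneg]
        ring_nf
      rw [hspow]
      have ht0 : 0 < r - 1 := by linarith
      have ht1 : r - 1 ≤ 1 := by linarith
      have htb : (r - 1) ^ b ≤ r - 1 := by
        calc (r - 1) ^ b ≤ (r - 1) ^ (1:ℝ) :=
              Real.rpow_le_rpow_of_exponent_ge ht0 ht1 hb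
          _ = r - 1 := Real.rpow_one _
      have htnn : 0 ≤ (r - 1) ^ b := Real.rpow_nonneg (by linarith) b
      constructor
      · nlinarith
      · -- need: -(r-1)^b - 1 + b*r ≤ (1 - 1/(2(b+1))) * b * r
        -- i.e. 1/(2(b+1)) * b * r ≤ 1 + (r-1)^b; have b*r ≤ 2b
        have h1 : 1 / (2 * (b + 1)) * (b * r) ≤ 1 := by
          have hbr : b * r ≤ 2 * b := by nlinarith
          have : 1 / (2 * (b + 1)) * (b * r) ≤ 1 / (2 * (b + 1)) * (2 * b) :=
            mul_le_mul_of_nonneg_left hbr (by positivity)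
          have h2 : 1 / (2 * (b + 1)) * (2 * b) ≤ 1 := by
            rw [div_mul_eq_mul_div, div_le_one hd]; linarith
          linarith
        nlinarith
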